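/- For bounded countable abelian groups, if H is a subgroup of G then m̄_H ≤ m̄_G pointwise, where m̄_G(pᵏ) = Σ_{n ≥ k} m_G(pⁿ). -/

import Mathlib

open Function

variable {p k : ℕ}

/-- The subgroup of `p`-torsion elements divisible by `p^(k-1)`. -/
def Sgrp (p k : ℕ) (A : Type*) [AddCommGroup A] : AddSubgroup A where
  carrier := {a | p • a = 0 ∧ ∃ b, p ^ (k - 1) • b = a}
  zero_mem' := ⟨smul_zero _, 0, smul_zero _⟩
  add_mem' := by
    rintro a b ⟨ha, x, hx⟩ ⟨hb, y, hy⟩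
    exact ⟨by rw [smul_add, ha, hb, add_zero], x + y, by rw [smul_add, hx, hy]⟩
  neg_mem' := by
    rintro a ⟨ha, x, hx⟩
    exact ⟨by rw [smul_neg, ha, neg_zero], -x, by rw [smul_neg, hx]⟩

lemma Sgrp_mem_iff {A : Type*} [AddCommGroup A] {a : A} :
    a ∈ Sgrp p k A ↔ p • a = 0 ∧ ∃ b, p ^ (k - 1) • b = a := Iff.rfl

lemma Sgrp_nsmul {A : Type*} [AddCommGroup A] (x : Sgrp p k A) : p • x = 0 := by
  have := x.2.1
  ext
  push_cast
  simpa using this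

/-- The `ZMod p` module structure on `Sgrp p k A`. -/
def SMod (p k : ℕ) (A : Type*) [AddCommGroup A] : Module (ZMod p) (Sgrp p k A) :=
  AddCommGroup.zmodModule Sgrp_nsmul

noncomputable def rankS (p k : ℕ) (A : Type*) [AddCommGroup A] : Cardinal :=
  @Module.rank (ZMod p) (Sgrp p k A) _ _ (SMod p k A)

lemma zmod_smul_eq {n : ℕ} [NeZero n] {M : Type*} [AddCommGroup M] [Module (ZMod n) M]
    (c : ZMod n) (x : M) : c • x = c.val • x := by
  conv_lhs => rw [← ZMod.natCast_zmod_val c]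
  rw [Nat.cast_smul_eq_nsmul]

lemma Sgrp_coe_smul {A : Type*} [AddCommGroup A] [NeZero p] (c : ZMod p) (x : Sgrp p k A) :
    (letI := SMod p k A; ((c • x : Sgrp p k A) : A)) = c.val • (x : A) := by
  letI := SMod p k A
  rw [zmod_smul_eq]
  push_cast
  rfl

lemma rankS_mono {A B : Type} [AddCommGroup A] [AddCommGroup B] [NeZero p]
    (f : A →+ B) (hf : Injective f) : rankS p k A ≤ rankS p k B := by
  letI := SMod p k A; letI := SMod p k B
  have hmem : ∀ x : Sgrp p k A, f x ∈ Sgrp p k B := by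
    rintro ⟨a, ha, y, hy⟩
    exact ⟨by rw [← map_nsmul, ha, map_zero], f y, by rw [← map_nsmul, hy]⟩
  let g : Sgrp p k A →+ Sgrp p k B :=
    AddMonoidHom.codRestrict (f.comp (Sgrp p k A).subtype) _ hmem
  have hg : Injective g := by
    intro x y hxy
    exact Subtype.ext (hf (congrArg Subtype.val hxy))
  exact LinearMap.rank_le_of_injective (g.toZModLinearMap p) hg

section Components

variable (hp : p.Prime)
include hp

lemma cast_pow_eq_zero {q n : ℕ} (hq : q = p ^ n) : (p : ZMod q) ^ n = 0 := by
  have : ((p ^ n : ℕ) : ZMod q) = 0 := by rw [← hq, ZMod.natCast_self]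
  push_cast at this
  exact this

lemma tor_dvd_val {q n : ℕ} (hq : q = p ^ n) (hn : 1 ≤ n) {a : ZMod q}
    (h1 : p • a = 0) : p ^ (n - 1) ∣ a.val := by
  haveI : NeZero q := ⟨hq ▸ pow_ne_zero _ hp.ne_zero⟩
  have hdvd : q ∣ p * a.val := by
    rw [← ZMod.natCast_eq_zero_iff]
    push_cast
    rw [ZMod.natCast_zmod_val]
    rw [nsmul_eq_mul] at h1
    exact_mod_cast h1
  obtain ⟨d, hd⟩ := hdvd
  refine ⟨d, ?_⟩
  have hpn : q = p * p ^ (n - 1) := by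
    rw [hq, ← pow_succ']
    congr 1
    omega
  have hd2 : p * a.val = p * (p ^ (n - 1) * d) := by rw [hd, hpn, mul_assoc]
  exact Nat.eq_of_mul_eq_mul_left hp.pos hd2

lemma rep_of {q n : ℕ} (hq : q = p ^ n) (hn : 1 ≤ n) {a : ZMod q}
    (h1 : p • a = 0) : ∃ c : ℕ, c < p ∧ a = c • ((p : ZMod q) ^ (n - 1)) := by
  haveI : NeZero q := ⟨hq ▸ pow_ne_zero _ hp.ne_zero⟩
  obtain ⟨d, hd⟩ := tor_dvd_val hp hq hn h1
  refine ⟨d % p, Nat.mod_lt _ hp.pos, ?_⟩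
  have h1' : a = ((p ^ (n - 1) * d : ℕ) : ZMod q) := by
    rw [← hd, ZMod.natCast_zmod_val]
  have hd' : ((d : ℕ) : ZMod q) = ((d % p : ℕ) : ZMod q) + (p : ZMod q) * ((d / p : ℕ) : ZMod q) := by
    conv_lhs => rw [← Nat.mod_add_div d p]
    push_cast
    ring
  have hz : (p : ZMod q) ^ n = 0 := cast_pow_eq_zero hp hq
  have hpow : (p : ZMod q) ^ (n - 1) * (p : ZMod q) = 0 := by
    rw [← pow_succ, show n - 1 + 1 = n by omega, hz]
  rw [nsmul_eq_mul, h1']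
  push_cast
  rw [hd']
  calc (p:ZMod q) ^ (n-1) * (↑(d % p) + ↑p * ↑(d / p))
      = ↑(d % p) * (p:ZMod q) ^ (n-1) + ((p:ZMod q)^(n-1) * (p:ZMod q)) * ↑(d/p) := by ring
    _ = ↑(d % p) * (p:ZMod q) ^ (n-1) := by rw [hpow]; ring

lemma coeff_zero {q n : ℕ} (hq : q = p ^ n) (hn : 1 ≤ n) {c : ℕ} (hc : c < p)
    (h : c • ((p : ZMod q) ^ (n - 1)) = 0) : c = 0 := by
  haveI : NeZero q := ⟨hq ▸ pow_ne_zero _ hp.ne_zero⟩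
  have hdvd : q ∣ c * p ^ (n - 1) := by
    rw [← ZMod.natCast_eq_zero_iff]
    push_cast
    rw [nsmul_eq_mul] at h
    exact_mod_cast h
  obtain ⟨d, hd⟩ := hdvd
  have hq' : q = p ^ (n - 1) * p := by rw [hq, ← pow_succ]; congr 1; omega
  rw [hq', mul_comm c _, mul_assoc] at hd
  have : c = p * d := Nat.eq_of_mul_eq_mul_left (pow_pos hp.pos _) hd
  exact Nat.eq_zero_of_dvd_of_lt ⟨d, this⟩ hc

lemma zero_of (hk : 1 ≤ k) {q : ℕ} (hq : IsPrimePow q)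
    (hnot : ¬∃ n, k ≤ n ∧ q = p ^ n) {a : ZMod q}
    (h1 : p • a = 0) (h2 : ∃ b, p ^ (k - 1) • b = a) : a = 0 := by
  obtain ⟨l, m, hl, hm, rfl⟩ := hq
  have hlprime : l.Prime := Nat.prime_iff.mpr hl
  haveI : NeZero (l ^ m) := ⟨pow_ne_zero _ hlprime.ne_zero⟩
  by_cases hlp : l = p
  · have hmk : m < k := by
      by_contra h
      exact hnot ⟨m, by omega, by rw [hlp]⟩
    obtain ⟨b, hb⟩ := h2
    rw [← hb, nsmul_eq_mul]
    have : ((p ^ (k - 1) : ℕ) : ZMod (l ^ m)) = 0 := by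
      rw [ZMod.natCast_eq_zero_iff, ← hlp]
      exact pow_dvd_pow l (by omega)
    push_cast at this ⊢
    rw [this, zero_mul]
  · have hcop : Nat.Coprime p (l ^ m) :=
      Nat.Coprime.pow_right m ((Nat.coprime_primes hp hlprime).mpr (fun h => hlp h.symm))
    have hu : IsUnit ((p : ℕ) : ZMod (l ^ m)) := (ZMod.isUnit_iff_coprime p (l ^ m)).mpr hcop
    rw [nsmul_eq_mul] at h1
    exact (hu.mul_right_eq_zero).mp h1

end Components

section DirectSumPart

variable {I : Type} (q : I → ℕ)

lemma of_mem_S (hp : p.Prime) (hk : 1 ≤ k) [DecidableEq I] (i : I) {n : ℕ}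
    (hkn : k ≤ n) (hqi : q i = p ^ n) :
    DirectSum.of (fun j => ZMod (q j)) i ((p : ZMod (q i)) ^ (n - 1)) ∈
      Sgrp p k (DirectSum I fun j => ZMod (q j)) := by
  constructor
  · rw [← map_nsmul]
    have h0 : p • ((p : ZMod (q i)) ^ (n - 1)) = 0 := by
      rw [nsmul_eq_mul]
      push_cast
      rw [← pow_succ', show n - 1 + 1 = n by omega]
      exact cast_pow_eq_zero hp hqi
    rw [h0, map_zero]
  · refine ⟨DirectSum.of (fun j => ZMod (q j)) i ((p : ZMod (q i)) ^ (n - k)), ?_⟩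
    rw [← map_nsmul]
    congr 1
    rw [nsmul_eq_mul]
    push_cast
    rw [← pow_add]
    congr 1
    omega

lemma lower_bound (hp : p.Prime) (hk : 1 ≤ k) :
    Cardinal.mk {i : I // ∃ n, k ≤ n ∧ q i = p ^ n} ≤
      rankS p k (DirectSum I fun j => ZMod (q j)) := by
  classical
  haveI : NeZero p := ⟨hp.ne_zero⟩
  haveI : Fact (1 < p) := ⟨hp.one_lt⟩
  letI := SMod p k (DirectSum I fun j => ZMod (q j))
  set A := DirectSum I fun j => ZMod (q j) with hA
  set T := {i : I // ∃ n, k ≤ n ∧ q i = p ^ n} with hT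
  let nt : T → ℕ := fun t => t.2.choose
  have hknt : ∀ t : T, k ≤ nt t := fun t => t.2.choose_spec.1
  have hqt : ∀ t : T, q t.1 = p ^ (nt t) := fun t => t.2.choose_spec.2
  let v : T → Sgrp p k A := fun t =>
    ⟨DirectSum.of (fun j => ZMod (q j)) t.1 ((p : ZMod (q t.1)) ^ (nt t - 1)),
      of_mem_S q hp hk t.1 (hknt t) (hqt t)⟩
  have hli : LinearIndependent (ZMod p) v := by
    rw [linearIndependent_iff']
    intro s g hsum t₀ ht₀
    let φ : Sgrp p k A →+ ZMod (q t₀.1) :=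
      (DFinsupp.evalAddMonoidHom t₀.1).comp (Sgrp p k A).subtype
    have hφval : ∀ x : Sgrp p k A, φ x = (x : A) t₀.1 := fun x => rfl
    have hφ := congrArg φ hsum
    rw [map_sum, map_zero] at hφ
    have hφsmul : ∀ (c : ZMod p) (x : Sgrp p k A), φ (c • x) = c.val • φ x := by
      intro c x
      rw [hφval, hφval, Sgrp_coe_smul]
      rfl
    have hterm : ∀ t ∈ s, t ≠ t₀ → φ (g t • v t) = 0 := by
      intro t _ hne
      rw [hφsmul, hφval]
      show (g t).val • ((DirectSum.of (fun j => ZMod (q j)) t.1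
        ((p : ZMod (q t.1)) ^ (nt t - 1))) t₀.1) = 0
      rw [DirectSum.of_eq_of_ne _ _ _ (fun h => hne (Subtype.ext h.symm)), smul_zero]
    have hmain : φ (g t₀ • v t₀) = 0 := by
      rw [← Finset.sum_eq_single_of_mem t₀ ht₀ hterm]
      exact hφ
    rw [hφsmul, hφval] at hmain
    have hmain2 : (g t₀).val • ((p : ZMod (q t₀.1)) ^ (nt t₀ - 1)) = 0 := by
      rw [show ((v t₀ : A) t₀.1) = (p : ZMod (q t₀.1)) ^ (nt t₀ - 1) from
        DirectSum.of_eq_same _ _] at hmain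
      exact hmain
    have := coeff_zero hp (hqt t₀) (le_trans hk (hknt t₀)) (ZMod.val_lt (g t₀)) hmain2
    exact (ZMod.val_eq_zero _).mp this
  exact hli.cardinal_le_rank

end DirectSumPart

section DirectSumPart2

variable {I : Type} (q : I → ℕ)

lemma upper_bound (hp : p.Prime) (hk : 1 ≤ k) (hq : ∀ i, IsPrimePow (q i)) :
    rankS p k (DirectSum I fun j => ZMod (q j)) ≤
      Cardinal.mk {i : I // ∃ n, k ≤ n ∧ q i = p ^ n} := by
  classical
  haveI : NeZero p := ⟨hp.ne_zero⟩
  haveI : Fact (1 < p) := ⟨hp.one_lt⟩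
  letI := SMod p k (DirectSum I fun j => ZMod (q j))
  set A := DirectSum I fun j => ZMod (q j) with hA
  set T := {i : I // ∃ n, k ≤ n ∧ q i = p ^ n} with hT
  let nt : T → ℕ := fun t => t.2.choose
  have hknt : ∀ t : T, k ≤ nt t := fun t => t.2.choose_spec.1
  have hqt : ∀ t : T, q t.1 = p ^ (nt t) := fun t => t.2.choose_spec.2
  let v : T → Sgrp p k A := fun t =>
    ⟨DirectSum.of (fun j => ZMod (q j)) t.1 ((p : ZMod (q t.1)) ^ (nt t - 1)),
      of_mem_S q hp hk t.1 (hknt t) (hqt t)⟩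
  have hspan : Submodule.span (ZMod p) (Set.range v) = ⊤ := by
    rw [Submodule.eq_top_iff']
    rintro ⟨a, ha, b, hb⟩
    have hcomp1 : ∀ i, p • (DFinsupp.evalAddMonoidHom (β := fun j => ZMod (q j)) i a) = 0 := by
      intro i
      rw [← map_nsmul, ha, map_zero]
    have hcomp2 : ∀ i, p ^ (k - 1) • (DFinsupp.evalAddMonoidHom (β := fun j => ZMod (q j)) i b)
        = DFinsupp.evalAddMonoidHom (β := fun j => ZMod (q j)) i a := by
      intro i
      rw [← map_nsmul, hb]
    have hmem : ∀ i, DirectSum.of (fun j => ZMod (q j)) i (a i) ∈ Sgrp p k A := by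
      intro i
      constructor
      · rw [← map_nsmul]
        have := hcomp1 i
        rw [show (DFinsupp.evalAddMonoidHom (β := fun j => ZMod (q j)) i a) = a i from rfl] at this
        rw [this, map_zero]
      · refine ⟨DirectSum.of (fun j => ZMod (q j)) i (b i), ?_⟩
        rw [← map_nsmul]
        exact congrArg _ (hcomp2 i)
    have hsum : (⟨a, ha, b, hb⟩ : Sgrp p k A) =
        ∑ i ∈ DFinsupp.support a, ⟨DirectSum.of (fun j => ZMod (q j)) i (a i), hmem i⟩ := by
      apply Subtype.ext
      rw [AddSubmonoidClass.coe_finset_sum]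
      exact (DirectSum.sum_support_of a).symm
    rw [hsum]
    apply Submodule.sum_mem
    intro i _
    by_cases hiT : ∃ n, k ≤ n ∧ q i = p ^ n
    · set t : T := ⟨i, hiT⟩ with ht
      obtain ⟨c, hc, hrep⟩ := rep_of hp (hqt t) (le_trans hk (hknt t)) (hcomp1 i)
      have heq : (⟨DirectSum.of (fun j => ZMod (q j)) i (a i), hmem i⟩ : Sgrp p k A)
          = (c : ZMod p) • v t := by
        apply Subtype.ext
        rw [Sgrp_coe_smul]
        show DirectSum.of (fun j => ZMod (q j)) i (a i) = ((c : ZMod p)).val •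
          DirectSum.of (fun j => ZMod (q j)) t.1 ((p : ZMod (q t.1)) ^ (nt t - 1))
        rw [← map_nsmul, ZMod.val_cast_of_lt hc]
        exact congrArg _ hrep
      rw [heq]
      exact Submodule.smul_mem _ _ (Submodule.subset_span (Set.mem_range_self t))
    · have h0 : a i = 0 := zero_of hp hk (hq i) hiT (hcomp1 i) ⟨b i, hcomp2 i⟩
      have : (⟨DirectSum.of (fun j => ZMod (q j)) i (a i), hmem i⟩ : Sgrp p k A) = 0 := by
        apply Subtype.ext
        show DirectSum.of (fun j => ZMod (q j)) i (a i) = 0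
        rw [h0, map_zero]
      rw [this]
      exact Submodule.zero_mem _
  calc rankS p k A = Module.rank (ZMod p) (Sgrp p k A) := rfl
    _ = Module.rank (ZMod p) (Submodule.span (ZMod p) (Set.range v)) := by
        rw [hspan, rank_top]
    _ ≤ Cardinal.mk (Set.range v) := rank_span_le _
    _ ≤ Cardinal.mk T := Cardinal.mk_range_le

end DirectSumPart2

theorem subgroup_mbar_le
    (G : Type*) [AddCommGroup G] [Countable G] (H : AddSubgroup G)
    (IG IH : Type) (qG : IG → ℕ) (qH : IH → ℕ)
    (hG : ∀ i, IsPrimePow (qG i)) (hH : ∀ i, IsPrimePow (qH i))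
    (hbG : ∃ N, ∀ i, qG i ≤ N) (hbH : ∃ N, ∀ i, qH i ≤ N)
    (eG : G ≃+ DirectSum IG fun i => ZMod (qG i))
    (eH : H ≃+ DirectSum IH fun i => ZMod (qH i))
    (p k : ℕ) (hp : p.Prime) (hk : 1 ≤ k) :
    Cardinal.mk {i : IH // ∃ n, k ≤ n ∧ qH i = p ^ n} ≤
      Cardinal.mk {i : IG // ∃ n, k ≤ n ∧ qG i = p ^ n} := by
  haveI : NeZero p := ⟨hp.ne_zero⟩
  have e1 := lower_bound (p := p) (k := k) qH hp hk
  have e3 := upper_bound (p := p) (k := k) qG hp hk hG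
  have e2 : rankS p k (DirectSum IH fun i => ZMod (qH i)) ≤
      rankS p k (DirectSum IG fun i => ZMod (qG i)) := by
    refine rankS_mono (eG.toAddMonoidHom.comp ((AddSubgroup.subtype H).comp
      eH.symm.toAddMonoidHom)) ?_
    exact eG.injective.comp ((AddSubgroup.subtype_injective H).comp eH.symm.injective)
  exact le_trans e1 (le_trans e2 e3)
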